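/- arXiv:1702.07003 — 4 statements merged into one kernel-verified Lean document; each statement's English description precedes it below -/
import Mathlib

section
/- Modified Gagliardo–Nirenberg inequality in dimension one (Lemma 2.2, case d = 1): for all real numbers a < b and every ε > 0 there exists a constant C_ε > 0 (depending only on ε, a, b) such that for every continuously differentiable function f : ℝ → ℝ one has ∫_a^b f(x)^4 dx ≤ ε · (∫_a^b (f'(x)^2 + f(x)^2) dx) · (∫_a^b |f(x) · log |f(x)|| dx)^2 + C_ε · ∫_a^b |f(x)| dx. -/
open MeasureTheory Real

open Set in
set_option maxHeartbeats 1000000 in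
/-- Modified Gagliardo–Nirenberg inequality in dimension one (Lemma 2.2, case d = 1):
for all `a < b` and `ε > 0` there is `C_ε > 0` such that for every `C¹` function `f : ℝ → ℝ`,
`∫_a^b f⁴ ≤ ε ‖f‖_{H¹(a,b)}² ‖f log|f|‖_{L¹(a,b)}² + C_ε ‖f‖_{L¹(a,b)}`. -/
theorem modified_gagliardo_nirenberg_dim_one (a b : ℝ) (hab : a < b) (ε : ℝ) (hε : 0 < ε) :
    ∃ C : ℝ, 0 < C ∧ ∀ f : ℝ → ℝ, ContDiff ℝ 1 f →
      (∫ x in a..b, f x ^ 4) ≤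
        ε * (∫ x in a..b, (deriv f x ^ 2 + f x ^ 2)) *
          (∫ x in a..b, |f x * Real.log (|f x|)|) ^ 2
        + C * ∫ x in a..b, |f x| := by
  have hba : 0 < b - a := sub_pos.mpr hab
  set c₁ : ℝ := min (1/16) ((b-a)^2/32) with hc₁def
  have hc₁ : 0 < c₁ := lt_min (by norm_num) (by positivity)
  have hc₁16 : c₁ ≤ 1/16 := min_le_left _ _
  have hc₁32 : c₁ ≤ (b-a)^2/32 := min_le_right _ _
  set T : ℝ := 2 + Real.sqrt (1/(ε*c₁)) with hTdef
  have hsqnn : 0 ≤ Real.sqrt (1/(ε*c₁)) := Real.sqrt_nonneg _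
  have hT2 : 2 ≤ T := le_add_of_nonneg_right hsqnn
  have hT0 : (0:ℝ) < T := by linarith
  have hTc : 1 ≤ ε * (T * ((T-1) * c₁)) := by
    have hs : Real.sqrt (1/(ε*c₁)) * Real.sqrt (1/(ε*c₁)) = 1/(ε*c₁) :=
      Real.mul_self_sqrt (by positivity)
    have h1 : Real.sqrt (1/(ε*c₁)) ≤ T := by rw [hTdef]; linarith
    have h2 : Real.sqrt (1/(ε*c₁)) ≤ T - 1 := by rw [hTdef]; linarith
    have hec : (0:ℝ) < ε * c₁ := mul_pos hε hc₁
    have key : 1/(ε*c₁) ≤ T * (T-1) := by nlinarith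
    rw [div_le_iff₀ hec] at key
    nlinarith
  clear_value T c₁
  refine ⟨Real.exp T ^ 3, by positivity, ?_⟩
  intro f hf
  set M := Real.exp T with hMdef
  have hM0 : 0 < M := Real.exp_pos T
  have hM3 : 3 ≤ M := by
    have := Real.add_one_le_exp T
    rw [hMdef]; linarith
  -- continuity and integrability
  have hfc : Continuous f := hf.continuous
  have hfd : Continuous (deriv f) := hf.continuous_deriv le_rfl
  have hlogc : Continuous fun x => |f x * Real.log (|f x|)| := by
    have h1 : (fun x => |f x * Real.log (|f x|)|) = fun x => |(|f x|) * Real.log (|f x|)| := by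
      funext x; rw [abs_mul, abs_mul, abs_abs]
    rw [h1]; exact (Real.continuous_mul_log.comp hfc.abs).abs
  have int4 : IntervalIntegrable (fun x => f x ^ 4) volume a b :=
    (hfc.pow 4).intervalIntegrable a b
  have intabs : IntervalIntegrable (fun x => |f x|) volume a b := hfc.abs.intervalIntegrable a b
  have intHf : IntervalIntegrable (fun x => deriv f x ^ 2 + f x ^ 2) volume a b :=
    ((hfd.pow 2).add (hfc.pow 2)).intervalIntegrable a b
  have intL : IntervalIntegrable (fun x => |f x * Real.log (|f x|)|) volume a b :=
    hlogc.intervalIntegrable a b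
  have intsq : ∀ u v : ℝ, IntervalIntegrable (fun x => f x ^ 2) volume u v :=
    fun u v => (hfc.pow 2).intervalIntegrable u v
  have intd2 : ∀ u v : ℝ, IntervalIntegrable (fun x => deriv f x ^ 2) volume u v :=
    fun u v => (hfd.pow 2).intervalIntegrable u v
  have intdabs : ∀ u v : ℝ, IntervalIntegrable (fun x => |deriv f x|) volume u v :=
    fun u v => hfd.abs.intervalIntegrable u v
  set H := ∫ x in a..b, (deriv f x ^ 2 + f x ^ 2) with hHdef
  set L := ∫ x in a..b, |f x * Real.log (|f x|)| with hLdef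
  set I := ∫ x in a..b, |f x| with hIdef
  have hH0 : 0 ≤ H :=
    intervalIntegral.integral_nonneg hab.le (fun u _ => by positivity)
  have hL0 : 0 ≤ L :=
    intervalIntegral.integral_nonneg hab.le (fun u _ => abs_nonneg _)
  have hsqH : (∫ x in a..b, f x ^ 2) ≤ H := by
    rw [hHdef]
    exact intervalIntegral.integral_mono_on hab.le (intsq a b) intHf
      (fun x _ => by nlinarith [sq_nonneg (deriv f x)])
  have hd2H : (∫ x in a..b, deriv f x ^ 2) ≤ H := by
    rw [hHdef]
    exact intervalIntegral.integral_mono_on hab.le (intd2 a b) intHf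
      (fun x _ => by nlinarith [sq_nonneg (f x)])
  clear_value H L I
  -- the maximum of |f| on [a,b]
  obtain ⟨x₀, hx₀mem, hx₀max'⟩ :=
    isCompact_Icc.exists_isMaxOn (Set.nonempty_Icc.mpr hab.le) hfc.abs.continuousOn
  have hmax : ∀ x ∈ Icc a b, |f x| ≤ |f x₀| := hx₀max'
  set S := |f x₀| with hSdef
  have hS0 : 0 ≤ S := abs_nonneg _
  clear_value S
  by_cases hSM : S ≤ M
  · -- easy case : |f| ≤ M everywhere
    have hpt : ∀ x ∈ Icc a b, f x ^ 4 ≤ M ^ 3 * |f x| := by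
      intro x hx
      have h1 : |f x| ≤ M := (hmax x hx).trans hSM
      have h2 : |f x| ^ 4 = f x ^ 4 := by
        rw [pow_abs, abs_of_nonneg (by positivity)]
      have h3 : |f x| ^ 3 ≤ M ^ 3 := pow_le_pow_left₀ (abs_nonneg _) h1 3
      have h4 : |f x| ^ 3 * |f x| ≤ M ^ 3 * |f x| :=
        mul_le_mul_of_nonneg_right h3 (abs_nonneg _)
      linarith [h2.ge, h4]
    have hint : (∫ x in a..b, f x ^ 4) ≤ ∫ x in a..b, M ^ 3 * |f x| :=
      intervalIntegral.integral_mono_on hab.le int4 (intabs.const_mul _) hpt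
    have heq : (∫ x in a..b, M ^ 3 * |f x|) = M ^ 3 * I := by
      rw [hIdef, intervalIntegral.integral_const_mul]
    have hnn : 0 ≤ ε * H * L ^ 2 :=
      mul_nonneg (mul_nonneg hε.le hH0) (sq_nonneg L)
    linarith [hint, heq.le, heq.ge]
  · push_neg at hSM
    have hS3 : 3 ≤ S := hM3.trans hSM.le
    have hS0' : (0:ℝ) < S := by linarith
    have hlogS : T - 1 ≤ Real.log (S/2) := by
      have h2 : Real.log 2 < 1 := by
        have := Real.log_two_lt_d9; linarith
      have hlogM : T ≤ Real.log S := by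
        rw [← Real.log_exp T]
        exact Real.log_le_log (Real.exp_pos T) (hMdef ▸ hSM.le)
      rw [Real.log_div (by linarith) (by norm_num)]
      linarith
    have hlogS0 : (0:ℝ) < Real.log (S/2) := by linarith
    have hH1 : (0:ℝ) < H + 1 := by linarith
    set δ : ℝ := min ((b-a)/2) (S^2/(4*(H+1))) with hδdef
    have hδ0 : 0 < δ := lt_min (by linarith) (div_pos (pow_pos hS0' 2) (by linarith))
    have hδba : δ ≤ (b-a)/2 := min_le_left _ _
    have hδS : δ ≤ S^2/(4*(H+1)) := min_le_right _ _
    clear_value δ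
    have hδH : δ * H ≤ S^2/4 := by
      have h1 : δ * (H+1) ≤ S^2/4 := by
        calc δ*(H+1) ≤ S^2/(4*(H+1))*(H+1) := mul_le_mul_of_nonneg_right hδS hH1.le
          _ = S^2/4 := by field_simp [hH1.ne']
      linarith [h1, hδ0.le]
    -- main geometric lemma: near the maximum, |f| stays above S/2
    have hmain : ∀ u v : ℝ, a ≤ u → v ≤ b → v - u = δ → x₀ ∈ Icc u v →
        δ * (S/2)^2 ≤ H ∧ δ * ((S/2) * Real.log (S/2)) ≤ L := by
      intro u v hau hvb hlen hx₀uv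
      have huv : u ≤ v := by linarith [hδ0, hlen.ge]
      have hd2uv : (∫ t in u..v, deriv f t ^ 2) ≤ H := by
        refine le_trans (intervalIntegral.integral_mono_interval hau huv hvb ?_ (intd2 a b)) hd2H
        filter_upwards with t using sq_nonneg _
      have habs' : (∫ t in u..v, |deriv f t|) ≤ δ*H/S + S/4 := by
        have hpt : ∀ t ∈ Icc u v, |deriv f t| ≤ (δ/S) * deriv f t ^ 2 + S/(4*δ) := by
          intro t _
          have h1 : (0:ℝ) ≤ (2*δ*|deriv f t| - S)^2 := sq_nonneg _
          have h2 : |deriv f t| ^ 2 = deriv f t ^ 2 := sq_abs _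
          have h4 : (δ/S) * deriv f t ^2 + S/(4*δ) = ((4*δ^2)* deriv f t^2 + S^2)/(4*δ*S) := by
            field_simp [hδ0.ne', hS0'.ne']
          have h5 : (0:ℝ) < 4*δ*S := by positivity
          rw [h4, le_div_iff₀ h5, ← h2]
          linarith [h1]
        calc (∫ t in u..v, |deriv f t|)
            ≤ ∫ t in u..v, ((δ/S) * deriv f t ^ 2 + S/(4*δ)) :=
              intervalIntegral.integral_mono_on huv (intdabs u v)
                (((intd2 u v).const_mul _).add intervalIntegrable_const) hpt
          _ = (δ/S) * (∫ t in u..v, deriv f t ^ 2) + δ * (S/(4*δ)) := by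
              rw [intervalIntegral.integral_add ((intd2 u v).const_mul _) intervalIntegrable_const,
                intervalIntegral.integral_const_mul, intervalIntegral.integral_const, hlen,
                smul_eq_mul]
          _ ≤ (δ/S) * H + δ * (S/(4*δ)) := by
              have h6 : (0:ℝ) ≤ δ/S := div_nonneg hδ0.le hS0'.le
              have := mul_le_mul_of_nonneg_left hd2uv h6
              linarith
          _ = δ*H/S + S/4 := by field_simp [hδ0.ne', hS0'.ne']
      have hdrop : ∀ x ∈ Icc u v, S/2 ≤ |f x| := by
        intro x hx
        have hdiff : |f x - f x₀| ≤ ∫ t in u..v, |deriv f t| := by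
          rcases le_total x x₀ with h | h
          · have hftc : (∫ t in x..x₀, deriv f t) = f x₀ - f x :=
              intervalIntegral.integral_deriv_eq_sub
                (fun t _ => (hf.differentiable one_ne_zero).differentiableAt)
                (hfd.intervalIntegrable x x₀)
            rw [abs_sub_comm, ← hftc]
            refine le_trans (intervalIntegral.abs_integral_le_integral_abs h) ?_
            refine intervalIntegral.integral_mono_interval hx.1 h hx₀uv.2 ?_ (intdabs u v)
            filter_upwards with t using abs_nonneg _
          · have hftc : (∫ t in x₀..x, deriv f t) = f x - f x₀ :=
              intervalIntegral.integral_deriv_eq_sub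
                (fun t _ => (hf.differentiable one_ne_zero).differentiableAt)
                (hfd.intervalIntegrable x₀ x)
            rw [← hftc]
            refine le_trans (intervalIntegral.abs_integral_le_integral_abs h) ?_
            refine intervalIntegral.integral_mono_interval hx₀uv.1 h hx.2 ?_ (intdabs u v)
            filter_upwards with t using abs_nonneg _
        have h1 : |f x - f x₀| ≤ S/2 := by
          refine hdiff.trans (habs'.trans ?_)
          have h5 : δ*H/S ≤ S/4 := by
            rw [div_le_iff₀ hS0']; linarith [hδH]
          linarith
        have h2 : |f x₀| - |f x| ≤ |f x₀ - f x| := abs_sub_abs_le_abs_sub _ _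
        rw [abs_sub_comm] at h2
        have h3 : S = |f x₀| := hSdef
        linarith
      constructor
      · have h1 : (∫ t in u..v, (S/2)^2) ≤ ∫ t in u..v, f t^2 :=
          intervalIntegral.integral_mono_on huv intervalIntegrable_const (intsq u v)
            (fun x hx => by nlinarith [hdrop x hx, sq_abs (f x), abs_nonneg (f x)])
        have h2 : (∫ t in u..v, f t^2) ≤ H := by
          refine le_trans (intervalIntegral.integral_mono_interval hau huv hvb ?_ (intsq a b)) hsqH
          filter_upwards with t using sq_nonneg _
        rw [intervalIntegral.integral_const, hlen, smul_eq_mul] at h1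
        linarith
      · have hptL : ∀ x ∈ Icc u v, (S/2) * Real.log (S/2) ≤ |f x * Real.log (|f x|)| := by
          intro x hx
          have hx1 : S/2 ≤ |f x| := hdrop x hx
          have hS2 : (0:ℝ) < S/2 := by linarith
          have hL1 : Real.log (S/2) ≤ Real.log (|f x|) := Real.log_le_log hS2 hx1
          have heq : |f x * Real.log (|f x|)| = |f x| * Real.log (|f x|) := by
            rw [abs_mul, abs_of_nonneg (le_trans hlogS0.le hL1)]
          rw [heq]
          exact mul_le_mul hx1 hL1 hlogS0.le (abs_nonneg _)
        have h1 : (∫ t in u..v, (S/2) * Real.log (S/2)) ≤ ∫ t in u..v, |f t * Real.log (|f t|)| :=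
          intervalIntegral.integral_mono_on huv intervalIntegrable_const
            (hlogc.intervalIntegrable u v) hptL
        have h2 : (∫ t in u..v, |f t * Real.log (|f t|)|) ≤ L := by
          rw [hLdef]
          refine intervalIntegral.integral_mono_interval hau huv hvb ?_ intL
          filter_upwards with t using abs_nonneg _
        rw [intervalIntegral.integral_const, hlen, smul_eq_mul] at h1
        linarith
    obtain ⟨hHlow, hLlow⟩ : δ * (S/2)^2 ≤ H ∧ δ * ((S/2) * Real.log (S/2)) ≤ L := by
      rcases le_total x₀ ((a+b)/2) with h | h
      · exact hmain x₀ (x₀ + δ) hx₀mem.1 (by linarith) (by ring) ⟨le_rfl, by linarith⟩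
      · exact hmain (x₀ - δ) x₀ (by linarith) hx₀mem.2 (by ring) ⟨by linarith, le_rfl⟩
    have hP : (0:ℝ) ≤ S^3 * Real.log (S/2) :=
      mul_nonneg (pow_nonneg hS0 3) hlogS0.le
    have hHL : c₁ * (S^3 * Real.log (S/2)) ≤ H * L := by
      rcases le_total ((b-a)/2) (S^2/(4*(H+1))) with hc | hc
      · have hδeq : δ = (b-a)/2 := hδdef.trans (min_eq_left hc)
        rw [hδeq] at hHlow hLlow
        have hprod := mul_le_mul hHlow hLlow
          (mul_nonneg (by linarith) (mul_nonneg (by linarith) hlogS0.le)) hH0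
        calc c₁*(S^3*Real.log (S/2)) ≤ ((b-a)^2/32)*(S^3*Real.log (S/2)) :=
              mul_le_mul_of_nonneg_right hc₁32 hP
          _ = ((b-a)/2*(S/2)^2) * ((b-a)/2*((S/2)*Real.log (S/2))) := by ring
          _ ≤ H*L := hprod
      · have hδeq : δ = S^2/(4*(H+1)) := hδdef.trans (min_eq_right hc)
        rw [hδeq] at hHlow hLlow
        have h1 : S^2/4 ≤ H + 1 := by
          have h0 : S^2/(4*(H+1)) * (S/2)^2 = S^4/(16*(H+1)) := by
            field_simp [hH1.ne']; ring
          rw [h0, div_le_iff₀ (by linarith : (0:ℝ) < 16*(H+1))] at hHlow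
          nlinarith [hH1, sq_nonneg (S^2 - 4*(H+1))]
        have h8 : (1:ℝ) ≤ H := by nlinarith
        have hLlow' : S^3 * Real.log (S/2) / (8*(H+1)) ≤ L := by
          have he : S^2/(4*(H+1)) * ((S/2) * Real.log (S/2))
              = S^3 * Real.log (S/2) / (8*(H+1)) := by
            field_simp [hH1.ne']; ring
          linarith [he ▸ hLlow]
        have hstep : H * (S^3 * Real.log (S/2) / (8*(H+1))) ≤ H * L :=
          mul_le_mul_of_nonneg_left hLlow' hH0
        refine le_trans ?_ hstep
        have hre : H * (S^3 * Real.log (S/2) / (8*(H+1)))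
            = H * (S^3*Real.log (S/2)) / (8*(H+1)) := by ring
        rw [hre, le_div_iff₀ (by linarith : (0:ℝ) < 8*(H+1))]
        have hq : c₁*(8*(H+1)) ≤ H := by
          have := mul_le_mul_of_nonneg_right hc₁16 (by linarith : (0:ℝ) ≤ 8*(H+1))
          linarith
        calc c₁*(S^3*Real.log (S/2))*(8*(H+1))
            = (c₁*(8*(H+1)))*(S^3*Real.log (S/2)) := by ring
          _ ≤ H*(S^3*Real.log (S/2)) := mul_le_mul_of_nonneg_right hq hP
    have hS3c : S^3 ≤ (ε*T)*(H*L) := by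
      have e2 : (T-1)*(c₁*S^3) ≤ Real.log (S/2)*(c₁*S^3) :=
        mul_le_mul_of_nonneg_right hlogS (mul_nonneg hc₁.le (pow_nonneg hS0 3))
      have heT : (0:ℝ) ≤ ε*T := mul_nonneg hε.le hT0.le
      calc S^3 = 1*S^3 := by ring
        _ ≤ (ε * (T * ((T-1) * c₁))) * S^3 :=
            mul_le_mul_of_nonneg_right hTc (pow_nonneg hS0 3)
        _ = (ε*T)*((T-1)*(c₁*S^3)) := by ring
        _ ≤ (ε*T)*(Real.log (S/2)*(c₁*S^3)) := mul_le_mul_of_nonneg_left e2 heT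
        _ = (ε*T)*(c₁*(S^3*Real.log (S/2))) := by ring
        _ ≤ (ε*T)*(H*L) := mul_le_mul_of_nonneg_left hHL heT
    have hpt : ∀ x ∈ Icc a b,
        f x ^4 ≤ M^3 * |f x| + (S^3/T) * |f x * Real.log (|f x|)| := by
      intro x hx
      have h2 : |f x| ^ 4 = f x ^ 4 := by rw [pow_abs, abs_of_nonneg (by positivity)]
      by_cases hMx : |f x| ≤ M
      · have h3 : |f x|^3 ≤ M^3 := pow_le_pow_left₀ (abs_nonneg _) hMx 3
        have h4 : |f x|^3 * |f x| ≤ M^3 * |f x| := mul_le_mul_of_nonneg_right h3 (abs_nonneg _)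
        have h5 : (0:ℝ) ≤ (S^3/T) * |f x * Real.log (|f x|)| :=
          mul_nonneg (div_nonneg (pow_nonneg hS0 3) hT0.le) (abs_nonneg _)
        linarith [h2.ge, h4, h5]
      · push_neg at hMx
        have h1 : |f x| ≤ S := hmax x hx
        have hlogfx : T ≤ Real.log (|f x|) := by
          rw [← Real.log_exp T]
          exact Real.log_le_log (Real.exp_pos T) (hMdef ▸ hMx.le)
        have habs2 : |f x * Real.log (|f x|)| = |f x| * Real.log (|f x|) := by
          rw [abs_mul, abs_of_nonneg (le_trans hT0.le hlogfx)]
        have h4 : |f x| ≤ (|f x| * Real.log (|f x|))/T := by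
          rw [le_div_iff₀ hT0]
          nlinarith [abs_nonneg (f x)]
        have h3 : |f x|^3 ≤ S^3 := pow_le_pow_left₀ (abs_nonneg _) h1 3
        have h6 : |f x|^3 * |f x| ≤ S^3 * ((|f x| * Real.log (|f x|))/T) := by
          calc |f x|^3 * |f x| ≤ S^3 * |f x| := mul_le_mul_of_nonneg_right h3 (abs_nonneg _)
            _ ≤ S^3 * ((|f x| * Real.log (|f x|))/T) :=
                mul_le_mul_of_nonneg_left h4 (pow_nonneg hS0 3)
        have h8 : (0:ℝ) ≤ M^3*|f x| := mul_nonneg (pow_nonneg hM0.le 3) (abs_nonneg _)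
        have h7 : S^3 * ((|f x| * Real.log (|f x|))/T) = (S^3/T)*(|f x| * Real.log (|f x|)) := by
          ring
        rw [habs2]
        linarith [h2.ge, h6, h8, h7.le, h7.ge]
    have hint : (∫ x in a..b, f x ^4) ≤ M^3*I + (S^3/T)*L := by
      have h1 : (∫ x in a..b, f x ^4)
          ≤ ∫ x in a..b, (M^3*|f x| + (S^3/T)*|f x * Real.log (|f x|)|) :=
        intervalIntegral.integral_mono_on hab.le int4
          ((intabs.const_mul _).add (intL.const_mul _)) hpt
      rw [intervalIntegral.integral_add (intabs.const_mul _) (intL.const_mul _),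
        intervalIntegral.integral_const_mul, intervalIntegral.integral_const_mul] at h1
      rw [hIdef, hLdef]
      exact h1
    have h2 : (S^3/T)*L ≤ ε*H*L^2 := by
      rw [div_mul_eq_mul_div, div_le_iff₀ hT0]
      calc S^3*L ≤ ((ε*T)*(H*L))*L := mul_le_mul_of_nonneg_right hS3c hL0
        _ = ε*H*L^2*T := by ring
    linarith [hint, h2]
end

section
/- Modified Gagliardo–Nirenberg inequality in dimension two, whole-space version (Lemma 2.2, case d = 2): for every ε > 0 there exists a constant C_ε > 0 such that for every compactly supported continuously differentiable function f : ℝ² → ℝ one has ∫_{ℝ²} |f(x)|³ dx ≤ ε · (∫_{ℝ²} (‖∇f(x)‖² + f(x)²) dx) · (∫_{ℝ²} |f(x) · log |f(x)|| dx) + C_ε · ∫_{ℝ²} |f(x)| dx. -/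
open MeasureTheory Real Module
open scoped ENNReal NNReal

set_option maxHeartbeats 1000000

local notation "E2" => EuclideanSpace ℝ (Fin 2)

lemma hasDerivAt_posPartSq (y : ℝ) : HasDerivAt (fun t : ℝ => max t 0 ^ 2) (2 * max y 0) y := by
  rcases lt_trichotomy y 0 with hy | hy | hy
  · have hev : (fun t : ℝ => max t 0 ^ 2) =ᶠ[nhds y] fun _ => (0:ℝ) := by
      filter_upwards [eventually_lt_nhds hy] with t ht
      simp [max_eq_right ht.le]
    rw [max_eq_right hy.le, mul_zero]
    exact (hasDerivAt_const y (0:ℝ)).congr_of_eventuallyEq hev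
  · subst hy
    rw [hasDerivAt_iff_isLittleO]
    rw [Asymptotics.isLittleO_iff]
    intro c hc
    filter_upwards [Metric.ball_mem_nhds 0 hc] with t ht
    have h1 : |max t 0| ≤ |t| := by
      rcases le_or_gt t 0 with h | h
      · simp [max_eq_right h]
      · simp [max_eq_left h.le]
    have h2 : |t| < c := by simpa [Real.dist_eq] using ht
    have key : ‖max t 0 ^ 2‖ ≤ c * ‖t‖ := by
      rw [Real.norm_eq_abs, Real.norm_eq_abs, abs_pow, pow_two]
      exact mul_le_mul (h1.trans_lt h2).le h1 (abs_nonneg _) ((abs_nonneg t).trans h2.le)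
    simpa using key
  · have hev : (fun t : ℝ => max t 0 ^ 2) =ᶠ[nhds y] fun t => t ^ 2 := by
      filter_upwards [eventually_gt_nhds hy] with t ht
      simp [max_eq_left ht.le]
    rw [max_eq_left hy.le]
    have h : HasDerivAt (fun t : ℝ => t ^ 2) (2 * y) y := by
      simpa [mul_comm] using hasDerivAt_pow 2 y
    exact h.congr_of_eventuallyEq hev

noncomputable def psi (M t : ℝ) : ℝ := max (t^2 - M^2) 0 ^ 2 * t / (t^2 + M^2)^2

noncomputable def psiD (M t : ℝ) : ℝ :=
  ((2 * max (t^2 - M^2) 0 * (2*t) * t + max (t^2 - M^2) 0 ^ 2) * (t^2+M^2)^2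
      - max (t^2 - M^2) 0 ^ 2 * t * (2*(t^2+M^2)*(2*t))) / ((t^2+M^2)^2)^2

lemma psi_hasDerivAt {M : ℝ} (hM : 0 < M) (t : ℝ) : HasDerivAt (psi M) (psiD M t) t := by
  have hq : (t^2 + M^2)^2 ≠ 0 := by positivity
  have hp : HasDerivAt (fun t : ℝ => t^2 - M^2) (2*t) t := by
    simpa [mul_comm] using ((hasDerivAt_pow 2 t).sub_const (M^2))
  have hw : HasDerivAt (fun t : ℝ => max (t^2 - M^2) 0 ^ 2) (2 * max (t^2 - M^2) 0 * (2*t)) t :=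
    by have := (hasDerivAt_posPartSq (t^2 - M^2)).comp t hp; exact this
  have hn : HasDerivAt (fun t : ℝ => max (t^2 - M^2) 0 ^ 2 * t)
      (2 * max (t^2 - M^2) 0 * (2*t) * t + max (t^2 - M^2) 0 ^ 2) t := by
    simpa using hw.fun_mul (hasDerivAt_id t)
  have hd : HasDerivAt (fun t : ℝ => (t^2 + M^2)^2) (2*(t^2+M^2)*(2*t)) t := by
    have h1 : HasDerivAt (fun t : ℝ => t^2 + M^2) (2*t) t := by
      simpa [mul_comm] using ((hasDerivAt_pow 2 t).add_const (M^2))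
    simpa using (h1.fun_pow 2)
  exact hn.div hd hq

lemma psiD_abs_le {M : ℝ} (hM : 0 < M) (t : ℝ) : |psiD M t| ≤ 9 := by
  have hq : 0 < t^2 + M^2 := by positivity
  rw [psiD, abs_div, div_le_iff₀ (by positivity),
    abs_of_nonneg (by positivity : (0:ℝ) ≤ ((t^2+M^2)^2)^2), abs_le]
  set m := max (t^2 - M^2) 0 with hmdef
  have hm0 : 0 ≤ m := le_max_right _ _
  have hmt : m ≤ t^2 := max_le (by nlinarith) (by positivity)
  obtain ⟨q, hqd⟩ : ∃ q, q = t^2 + M^2 := ⟨_, rfl⟩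
  rw [← hqd]
  have ht2 : t^2 ≤ q := by rw [hqd]; nlinarith
  have hq0 : 0 < q := hqd ▸ hq
  have hmq : m ≤ q := hmt.trans ht2
  have hA : m * t^2 ≤ q * q := mul_le_mul hmq ht2 (sq_nonneg t) hq0.le
  have hG : m * t^2 * q^2 ≤ q * q * q^2 := mul_le_mul_of_nonneg_right hA (by positivity)
  have hB : m^2 * q^2 ≤ q * q * q^2 := by nlinarith [mul_le_mul hmq hmq hm0 hq0.le]
  have hC : m^2 * t^2 * q ≤ q * q * q^2 := by
    nlinarith [mul_le_mul hmq hmq hm0 hq0.le,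
      mul_le_mul_of_nonneg_right
        (mul_le_mul (mul_le_mul hmq hmq hm0 hq0.le) ht2 (sq_nonneg t) (by positivity)) hq0.le]
  have hD : 0 ≤ m * t^2 * q^2 := by positivity
  have hE : 0 ≤ m^2 * q^2 := by positivity
  have hF : 0 ≤ m^2 * t^2 * q := by positivity
  constructor <;> nlinarith [hG, hB, hC, hD, hE, hF]

lemma psi_zero (M : ℝ) : psi M 0 = 0 := by simp [psi]

lemma psi_eq_zero_of_le {M t : ℝ} (h : |t| ≤ M) : psi M t = 0 := by
  have : t^2 - M^2 ≤ 0 := by nlinarith [sq_abs t, sq_nonneg (|t| + M), abs_nonneg t]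
  simp [psi, max_eq_right this]

lemma psi_abs_le {M : ℝ} (hM : 0 < M) (t : ℝ) : |psi M t| ≤ |t| := by
  have hq : 0 < t^2 + M^2 := by positivity
  rw [psi, abs_div, abs_mul, div_le_iff₀ (by positivity),
    abs_of_nonneg (by positivity : (0:ℝ) ≤ (t^2+M^2)^2)]
  have hm : |max (t^2 - M^2) 0 ^ 2| = max (t^2 - M^2) 0 ^ 2 := abs_of_nonneg (by positivity)
  rw [hm]
  have hmt : max (t^2 - M^2) 0 ≤ t^2 := max_le (by nlinarith) (by positivity)
  have h1 : max (t^2 - M^2) 0 ^ 2 ≤ (t^2+M^2)^2 :=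
    pow_le_pow_left₀ (le_max_right _ _) (hmt.trans (by nlinarith)) 2
  nlinarith [abs_nonneg t, h1]

lemma psi_lower {M t : ℝ} (hM : 0 < M) (h : 2*M ≤ |t|) : |t| ≤ 4 * |psi M t| := by
  have hq : 0 < t^2 + M^2 := by positivity
  have ht2 : 4*M^2 ≤ t^2 := by nlinarith [sq_abs t]
  have hmax : max (t^2 - M^2) 0 = t^2 - M^2 := max_eq_left (by nlinarith)
  rw [psi, abs_div, abs_mul, hmax, abs_of_nonneg (by positivity : (0:ℝ) ≤ (t^2+M^2)^2),
    abs_of_nonneg (by nlinarith : (0:ℝ) ≤ (t^2-M^2)^2), ← mul_div_assoc,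
    le_div_iff₀ (by positivity)]
  have key : (t^2+M^2)^2 ≤ 4 * (t^2-M^2)^2 := by nlinarith
  nlinarith [abs_nonneg t, mul_le_mul_of_nonneg_left key (abs_nonneg t)]

lemma contDiff_posPartSq : ContDiff ℝ 1 (fun y : ℝ => max y 0 ^ 2) := by
  rw [contDiff_one_iff_deriv]
  refine ⟨fun y => (hasDerivAt_posPartSq y).differentiableAt, ?_⟩
  have : deriv (fun t : ℝ => max t 0 ^ 2) = fun y => 2 * max y 0 := by
    funext y; exact (hasDerivAt_posPartSq y).deriv
  rw [this]
  fun_prop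

lemma psi_contDiff {M : ℝ} (hM : 0 < M) : ContDiff ℝ 1 (psi M) := by
  have h1 : ContDiff ℝ 1 (fun t : ℝ => max (t^2 - M^2) 0 ^ 2 * t) := by
    have := contDiff_posPartSq.comp
      ((contDiff_id.pow 2).sub contDiff_const : ContDiff ℝ 1 (fun t : ℝ => t^2 - M^2))
    exact this.mul contDiff_id
  exact h1.div (((contDiff_id.pow 2).add contDiff_const).pow 2) (fun t => by positivity)

lemma cs_int {a b : E2 → ℝ} (ha : Continuous a) (hb : Continuous b)
    (hsa : HasCompactSupport a) (hsb : HasCompactSupport b)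
    (ha0 : ∀ x, 0 ≤ a x) (hb0 : ∀ x, 0 ≤ b x) :
    (∫ x, a x * b x) ^ 2 ≤ (∫ x, a x ^ 2) * (∫ x, b x ^ 2) := by
  have hpq : Real.HolderConjugate 2 2 := ⟨by norm_num, by norm_num, by norm_num⟩
  have hma : MemLp a (ENNReal.ofReal 2) volume := ha.memLp_of_hasCompactSupport hsa
  have hmb : MemLp b (ENNReal.ofReal 2) volume := hb.memLp_of_hasCompactSupport hsb
  have H := integral_mul_le_Lp_mul_Lq_of_nonneg hpq (ae_of_all _ ha0) (ae_of_all _ hb0) hma hmb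
  have hr : ∀ y : ℝ, y ^ (2:ℝ) = y ^ 2 := fun y => by
    rw [show (2:ℝ) = ((2:ℕ):ℝ) by norm_num, Real.rpow_natCast]
  simp_rw [hr] at H
  have hX : 0 ≤ ∫ x, a x ^ 2 := integral_nonneg fun x => sq_nonneg _
  have hY : 0 ≤ ∫ x, b x ^ 2 := integral_nonneg fun x => sq_nonneg _
  have hab : 0 ≤ ∫ x, a x * b x := integral_nonneg fun x => mul_nonneg (ha0 x) (hb0 x)
  calc (∫ x, a x * b x) ^ 2
      ≤ ((∫ x, a x ^ 2) ^ (1/(2:ℝ)) * (∫ x, b x ^ 2) ^ (1/(2:ℝ))) ^ 2 := by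
        apply pow_le_pow_left₀ hab H
    _ = (∫ x, a x ^ 2) * (∫ x, b x ^ 2) := by
        rw [mul_pow, ← Real.rpow_natCast ((∫ x, a x ^ 2) ^ (1/(2:ℝ))) 2,
          ← Real.rpow_natCast ((∫ x, b x ^ 2) ^ (1/(2:ℝ))) 2,
          ← Real.rpow_mul hX, ← Real.rpow_mul hY]
        norm_num

lemma gns_real {u : E2 → ℝ} (hu : ContDiff ℝ 1 u) (h2u : HasCompactSupport u) :
    (∫ x, u x ^ 2) ≤ (lintegralPowLePowLIntegralFDerivConst (volume : Measure E2) 2 : ℝ)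
      * (∫ x, ‖fderiv ℝ u x‖) ^ 2 := by
  have hp : Real.HolderConjugate (finrank ℝ E2) 2 := by
    rw [finrank_euclideanSpace_fin]; exact ⟨by norm_num, by norm_num, by norm_num⟩
  have key := lintegral_pow_le_pow_lintegral_fderiv (volume : Measure E2) hu h2u hp
  have int_u2 : Integrable (fun x => u x ^ 2) volume :=
    (hu.continuous.fun_pow 2).integrable_of_hasCompactSupport
      (HasCompactSupport.comp_left (g := fun t : ℝ => t ^ 2) h2u (by simp))
  have int_du : Integrable (fun x => ‖fderiv ℝ u x‖) volume :=
    (hu.continuous_fderiv one_ne_zero).norm.integrable_of_hasCompactSupport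
      (h2u.fderiv (𝕜 := ℝ)).norm
  have hB : 0 ≤ ∫ x, ‖fderiv ℝ u x‖ := integral_nonneg fun x => norm_nonneg _
  have l1 : ∫⁻ x, ‖u x‖ₑ ^ (2:ℝ) = ENNReal.ofReal (∫ x, u x ^ 2) := by
    rw [ofReal_integral_eq_lintegral_ofReal int_u2 (ae_of_all _ fun x => sq_nonneg _)]
    refine lintegral_congr fun x => ?_
    rw [← ofReal_norm_eq_enorm,
      ENNReal.ofReal_rpow_of_nonneg (norm_nonneg _) (by norm_num : (0:ℝ) ≤ 2)]
    congr 1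
    rw [show (2:ℝ) = ((2:ℕ):ℝ) by norm_num, Real.rpow_natCast, Real.norm_eq_abs, sq_abs]
  have l2 : ∫⁻ x, ‖fderiv ℝ u x‖ₑ = ENNReal.ofReal (∫ x, ‖fderiv ℝ u x‖) := by
    rw [ofReal_integral_eq_lintegral_ofReal int_du (ae_of_all _ fun x => norm_nonneg _)]
    exact lintegral_congr fun x => (ofReal_norm_eq_enorm _).symm
  rw [l1, l2] at key
  have hrhs : ((lintegralPowLePowLIntegralFDerivConst (volume : Measure E2) 2 : ℝ≥0) : ℝ≥0∞)
      * ENNReal.ofReal (∫ x, ‖fderiv ℝ u x‖) ^ (2:ℝ)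
      = ENNReal.ofReal ((lintegralPowLePowLIntegralFDerivConst (volume : Measure E2) 2 : ℝ)
        * (∫ x, ‖fderiv ℝ u x‖) ^ 2) := by
    rw [ENNReal.ofReal_rpow_of_nonneg hB (by norm_num : (0:ℝ) ≤ 2),
      ← ENNReal.ofReal_coe_nnreal, ← ENNReal.ofReal_mul (by positivity),
      show (2:ℝ) = ((2:ℕ):ℝ) by norm_num, Real.rpow_natCast]
  rw [hrhs] at key
  exact (ENNReal.ofReal_le_ofReal_iff (by positivity)).mp key

lemma key_gn {f : E2 → ℝ} (hf : ContDiff ℝ 1 f) (h2f : HasCompactSupport f)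
    {M : ℝ} (hM : 0 < M) :
    (∫ x, |psi M (f x)| ^ 3) ≤
      324 * (lintegralPowLePowLIntegralFDerivConst (volume : Measure E2) 2 : ℝ)
      * (∫ x, |psi M (f x)|) * (∫ x, ‖fderiv ℝ f x‖ ^ 2) := by
  set C0 := (lintegralPowLePowLIntegralFDerivConst (volume : Measure E2) 2 : ℝ) with hC0def
  have hC0 : 0 ≤ C0 := (lintegralPowLePowLIntegralFDerivConst (volume : Measure E2) 2).coe_nonneg
  have hψ := psi_contDiff hM
  have cf := hf.continuous
  have hh : ContDiff ℝ 1 (fun x => psi M (f x)) := hψ.comp hf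
  have hch : Continuous (fun x => psi M (f x)) := hh.continuous
  have h2h : HasCompactSupport (fun x => psi M (f x)) :=
    HasCompactSupport.comp_left (g := psi M) h2f (psi_zero M)
  have hcf' : Continuous (fun x => fderiv ℝ f x) := hf.continuous_fderiv one_ne_zero
  have h2f' : HasCompactSupport (fun x => fderiv ℝ f x) := h2f.fderiv (𝕜 := ℝ)
  have habs : HasCompactSupport (fun x => |psi M (f x)|) :=
    HasCompactSupport.comp_left (g := fun t : ℝ => |t|) h2h (by simp)
  have hcabs : Continuous (fun x => |psi M (f x)|) := hch.abs
  -- u := psi^2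
  have hu : ContDiff ℝ 1 (fun x => psi M (f x) ^ 2) := hh.pow 2
  have h2u : HasCompactSupport (fun x => psi M (f x) ^ 2) :=
    HasCompactSupport.comp_left (g := fun t : ℝ => psi M t ^ 2) h2f (by simp [psi_zero])
  have hder : ∀ x, ‖fderiv ℝ (fun x => psi M (f x) ^ 2) x‖
      ≤ 18 * (|psi M (f x)| * ‖fderiv ℝ f x‖) := by
    intro x
    have h1 : HasDerivAt (fun t => psi M t ^ 2) (2 * psi M (f x) * psiD M (f x)) (f x) := by
      simpa using (psi_hasDerivAt hM (f x)).fun_pow 2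
    have h2 : HasFDerivAt (fun x => psi M (f x) ^ 2)
        ((2 * psi M (f x) * psiD M (f x)) • fderiv ℝ f x) x :=
      h1.comp_hasFDerivAt x (hf.differentiable one_ne_zero x).hasFDerivAt
    rw [h2.fderiv, norm_smul]
    have hc : ‖2 * psi M (f x) * psiD M (f x)‖ ≤ 18 * |psi M (f x)| := by
      rw [Real.norm_eq_abs, abs_mul, abs_mul, abs_two]
      nlinarith [psiD_abs_le hM (f x), abs_nonneg (psi M (f x)), abs_nonneg (psiD M (f x))]
    calc ‖2 * psi M (f x) * psiD M (f x)‖ * ‖fderiv ℝ f x‖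
        ≤ (18 * |psi M (f x)|) * ‖fderiv ℝ f x‖ :=
          mul_le_mul_of_nonneg_right hc (norm_nonneg _)
      _ = 18 * (|psi M (f x)| * ‖fderiv ℝ f x‖) := by ring
  -- integrability
  have int_du : Integrable (fun x => ‖fderiv ℝ (fun x => psi M (f x) ^ 2) x‖) volume :=
    (hu.continuous_fderiv one_ne_zero).norm.integrable_of_hasCompactSupport
      (h2u.fderiv (𝕜 := ℝ)).norm
  have int_hnf : Integrable (fun x => |psi M (f x)| * ‖fderiv ℝ f x‖) volume :=
    (hcabs.fun_mul hcf'.norm).integrable_of_hasCompactSupport (habs.mul_right)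
  -- step G2
  have G2 : (∫ x, ‖fderiv ℝ (fun x => psi M (f x) ^ 2) x‖)
      ≤ 18 * ∫ x, |psi M (f x)| * ‖fderiv ℝ f x‖ := by
    rw [← integral_const_mul]
    exact integral_mono int_du (int_hnf.const_mul 18) hder
  have G := gns_real hu h2u
  set S1 := ∫ x, |psi M (f x)| with hS1def
  set S2 := ∫ x, psi M (f x) ^ 2 with hS2def
  set S3 := ∫ x, |psi M (f x)| ^ 3 with hS3def
  set S4 := ∫ x, (psi M (f x) ^ 2) ^ 2 with hS4def
  set B := ∫ x, |psi M (f x)| * ‖fderiv ℝ f x‖ with hBdef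
  set D := ∫ x, ‖fderiv ℝ f x‖ ^ 2 with hDdef
  have hS1 : 0 ≤ S1 := integral_nonneg fun x => abs_nonneg _
  have hS2 : 0 ≤ S2 := integral_nonneg fun x => sq_nonneg _
  have hS3 : 0 ≤ S3 := integral_nonneg fun x => by positivity
  have hD : 0 ≤ D := integral_nonneg fun x => by positivity
  have hB : 0 ≤ B := integral_nonneg fun x => by positivity
  have hdu : 0 ≤ ∫ x, ‖fderiv ℝ (fun x => psi M (f x) ^ 2) x‖ :=
    integral_nonneg fun x => norm_nonneg _
  -- S4 ≤ 324 C0 B^2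
  have hS4b : S4 ≤ 324 * C0 * B ^ 2 := by
    calc S4 ≤ C0 * (∫ x, ‖fderiv ℝ (fun x => psi M (f x) ^ 2) x‖) ^ 2 := G
      _ ≤ C0 * (18 * B) ^ 2 := by
          apply mul_le_mul_of_nonneg_left _ hC0
          exact pow_le_pow_left₀ hdu G2 2
      _ = 324 * C0 * B ^ 2 := by ring
  -- B^2 ≤ S2 * D
  have hB2 : B ^ 2 ≤ S2 * D := by
    have := cs_int hcabs hcf'.norm habs (h2f'.norm)
      (fun x => abs_nonneg _) (fun x => norm_nonneg _)
    simpa [sq_abs] using this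
  -- S3^2 ≤ S4 * S2
  have hS3b : S3 ^ 2 ≤ S4 * S2 := by
    have := cs_int (hch.fun_pow 2) hcabs
      (HasCompactSupport.comp_left (g := fun t : ℝ => t ^ 2) h2h (by simp)) habs
      (fun x => sq_nonneg _) (fun x => abs_nonneg _)
    have heq : (fun x => psi M (f x) ^ 2 * |psi M (f x)|) = fun x => |psi M (f x)| ^ 3 := by
      funext x
      rw [← sq_abs]
      ring
    rw [heq] at this
    simpa [sq_abs] using this
  -- S2^2 ≤ S3 * S1
  have hS2b : S2 ^ 2 ≤ S3 * S1 := by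
    have hca : Continuous (fun x => Real.sqrt (|psi M (f x)| ^ 3)) :=
      Real.continuous_sqrt.comp (hcabs.fun_pow 3)
    have hcb : Continuous (fun x => Real.sqrt |psi M (f x)|) :=
      Real.continuous_sqrt.comp hcabs
    have hsa : HasCompactSupport (fun x => Real.sqrt (|psi M (f x)| ^ 3)) :=
      HasCompactSupport.comp_left (g := fun t : ℝ => Real.sqrt (|t| ^ 3)) h2h (by simp)
    have hsb : HasCompactSupport (fun x => Real.sqrt |psi M (f x)|) :=
      HasCompactSupport.comp_left (g := fun t : ℝ => Real.sqrt |t|) h2h (by simp)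
    have := cs_int hca hcb hsa hsb (fun x => Real.sqrt_nonneg _) (fun x => Real.sqrt_nonneg _)
    have e1 : (fun x => Real.sqrt (|psi M (f x)| ^ 3) * Real.sqrt |psi M (f x)|)
        = fun x => psi M (f x) ^ 2 := by
      funext x
      rw [← Real.sqrt_mul (by positivity), show |psi M (f x)| ^ 3 * |psi M (f x)|
        = (psi M (f x) ^ 2) ^ 2 by rw [← pow_succ, ← sq_abs (psi M (f x)), ← pow_mul],
        Real.sqrt_sq (sq_nonneg _)]
    have e2 : (fun x => Real.sqrt (|psi M (f x)| ^ 3) ^ 2) = fun x => |psi M (f x)| ^ 3 := by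
      funext x; rw [Real.sq_sqrt (by positivity)]
    have e3 : (fun x => Real.sqrt |psi M (f x)| ^ 2) = fun x => |psi M (f x)| := by
      funext x; rw [Real.sq_sqrt (abs_nonneg _)]
    rw [e1] at this
    calc S2 ^ 2 ≤ (∫ x, Real.sqrt (|psi M (f x)| ^ 3) ^ 2) * ∫ x, Real.sqrt |psi M (f x)| ^ 2 :=
        this
      _ = S3 * S1 := by rw [e2, e3]
  -- combine
  have chain : S3 ^ 2 ≤ (324 * C0 * S1 * D) * S3 := by
    calc S3 ^ 2 ≤ S4 * S2 := hS3b
      _ ≤ (324 * C0 * B ^ 2) * S2 := mul_le_mul_of_nonneg_right hS4b hS2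
      _ ≤ (324 * C0 * (S2 * D)) * S2 := by
          apply mul_le_mul_of_nonneg_right _ hS2
          apply mul_le_mul_of_nonneg_left hB2 (by positivity)
      _ = (324 * C0 * D) * S2 ^ 2 := by ring
      _ ≤ (324 * C0 * D) * (S3 * S1) := by
          apply mul_le_mul_of_nonneg_left hS2b (by positivity)
      _ = (324 * C0 * S1 * D) * S3 := by ring
  rcases eq_or_lt_of_le hS3 with h0 | hpos
  · rw [← h0]
    positivity
  · have := le_of_mul_le_mul_right (by calc S3 * S3 = S3 ^ 2 := by ring
      _ ≤ (324 * C0 * S1 * D) * S3 := chain) hpos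
    exact this

/-- Modified Gagliardo–Nirenberg inequality in dimension two, whole-space version
(Lemma 2.2, case d = 2): for every `ε > 0` there is `C_ε > 0` such that for every
compactly supported `C¹` function `f : ℝ² → ℝ`,
`∫ |f|³ ≤ ε ‖f‖_{H¹}² ‖f log|f|‖_{L¹} + C_ε ‖f‖_{L¹}`. -/
theorem modified_gagliardo_nirenberg_dim_two (ε : ℝ) (hε : 0 < ε) :
    ∃ C : ℝ, 0 < C ∧ ∀ f : EuclideanSpace ℝ (Fin 2) → ℝ,
      ContDiff ℝ 1 f → HasCompactSupport f →
      (∫ x, |f x| ^ 3) ≤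
        ε * (∫ x, (‖gradient f x‖ ^ 2 + f x ^ 2)) *
          (∫ x, |f x * Real.log (|f x|)|)
        + C * ∫ x, |f x| := by
  set C0 := (lintegralPowLePowLIntegralFDerivConst (volume : Measure E2) 2 : ℝ) with hC0def
  have hC0 : 0 ≤ C0 := (lintegralPowLePowLIntegralFDerivConst (volume : Measure E2) 2).coe_nonneg
  set M := Real.exp (max 1 (20736 * (C0 + 1) / ε)) with hMdef
  have hM : 0 < M := Real.exp_pos _
  have hlog : Real.log M = max 1 (20736 * (C0 + 1) / ε) := Real.log_exp _
  have hlog1 : 1 ≤ Real.log M := hlog ▸ le_max_left _ _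
  have hlogC : 20736 * (C0 + 1) / ε ≤ Real.log M := hlog ▸ le_max_right _ _
  refine ⟨4 * M ^ 2, by positivity, fun f hf h2f => ?_⟩
  have cf := hf.continuous
  have hch : Continuous (fun x => psi M (f x)) := (psi_contDiff hM).continuous.comp cf
  have h2h : HasCompactSupport (fun x => psi M (f x)) :=
    HasCompactSupport.comp_left (g := psi M) h2f (psi_zero M)
  have hcabs : Continuous (fun x => |psi M (f x)|) := hch.abs
  have habs : HasCompactSupport (fun x => |psi M (f x)|) :=
    HasCompactSupport.comp_left (g := fun t : ℝ => |t|) h2h (by simp)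
  -- integrable things
  have int_f1 : Integrable (fun x => |f x|) volume :=
    cf.abs.integrable_of_hasCompactSupport
      (HasCompactSupport.comp_left (g := fun t : ℝ => |t|) h2f (by simp))
  have int_f3 : Integrable (fun x => |f x| ^ 3) volume :=
    (cf.abs.fun_pow 3).integrable_of_hasCompactSupport
      (HasCompactSupport.comp_left (g := fun t : ℝ => |t| ^ 3) h2f (by simp))
  have int_h3 : Integrable (fun x => |psi M (f x)| ^ 3) volume :=
    (hcabs.fun_pow 3).integrable_of_hasCompactSupport
      (HasCompactSupport.comp_left (g := fun t : ℝ => |t| ^ 3) h2h (by simp))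
  have int_h1 : Integrable (fun x => |psi M (f x)|) volume :=
    hcabs.integrable_of_hasCompactSupport habs
  have hlogeq : (fun x => |f x * Real.log (|f x|)|) = fun x => |f x * Real.log (f x)| := by
    funext x; rw [Real.log_abs]
  have int_flog : Integrable (fun x => |f x * Real.log (|f x|)|) volume := by
    rw [hlogeq]
    exact (Real.continuous_mul_log.comp cf).abs.integrable_of_hasCompactSupport
      (HasCompactSupport.comp_left
        (g := fun t : ℝ => |t * Real.log t|) h2f (by simp))
  have hcf' : Continuous (fun x => fderiv ℝ f x) := hf.continuous_fderiv one_ne_zero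
  have int_D : Integrable (fun x => ‖fderiv ℝ f x‖ ^ 2) volume :=
    (hcf'.norm.fun_pow 2).integrable_of_hasCompactSupport
      (HasCompactSupport.comp_left (g := fun L : E2 →L[ℝ] ℝ => ‖L‖ ^ 2)
        (h2f.fderiv (𝕜 := ℝ)) (by simp))
  have int_f2 : Integrable (fun x => f x ^ 2) volume :=
    (cf.fun_pow 2).integrable_of_hasCompactSupport
      (HasCompactSupport.comp_left (g := fun t : ℝ => t ^ 2) h2f (by simp))
  -- rewrite gradient norm
  have hgrad : ∀ x, ‖gradient f x‖ = ‖fderiv ℝ f x‖ := fun x =>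
    LinearIsometryEquiv.norm_map (InnerProductSpace.toDual ℝ E2).symm (fderiv ℝ f x)
  have hHeq : (∫ x, (‖gradient f x‖ ^ 2 + f x ^ 2))
      = ∫ x, (‖fderiv ℝ f x‖ ^ 2 + f x ^ 2) := by
    refine integral_congr_ae (ae_of_all _ fun x => ?_)
    simp only [hgrad x]
  rw [hHeq]
  set S1 := ∫ x, |psi M (f x)| with hS1def
  set S3 := ∫ x, |psi M (f x)| ^ 3 with hS3def
  set D := ∫ x, ‖fderiv ℝ f x‖ ^ 2 with hDdef
  set L := ∫ x, |f x * Real.log (|f x|)| with hLdef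
  set F1 := ∫ x, |f x| with hF1def
  have hS1 : 0 ≤ S1 := integral_nonneg fun x => abs_nonneg _
  have hS3 : 0 ≤ S3 := integral_nonneg fun x => by positivity
  have hD : 0 ≤ D := integral_nonneg fun x => by positivity
  have hL : 0 ≤ L := integral_nonneg fun x => abs_nonneg _
  have hF1 : 0 ≤ F1 := integral_nonneg fun x => abs_nonneg _
  -- H ≥ D and H ≥ 0
  have hH : D ≤ ∫ x, (‖fderiv ℝ f x‖ ^ 2 + f x ^ 2) := by
    rw [hDdef]
    apply integral_mono int_D (int_D.add int_f2)
    intro x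
    simp only [Pi.add_apply]
    nlinarith [sq_nonneg (f x), sq_nonneg ‖fderiv ℝ f x‖]
  have hHnn : 0 ≤ ∫ x, (‖fderiv ℝ f x‖ ^ 2 + f x ^ 2) := hD.trans hH
  -- A1 : ∫|f|^3 ≤ 64 S3 + 4 M^2 F1
  have A1 : (∫ x, |f x| ^ 3) ≤ 64 * S3 + 4 * M ^ 2 * F1 := by
    have pointwise : ∀ x, |f x| ^ 3 ≤ 64 * |psi M (f x)| ^ 3 + 4 * M ^ 2 * |f x| := by
      intro x
      rcases le_or_gt (|f x|) (2 * M) with hle | hgt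
      · have h1 : |f x| ^ 3 ≤ (2 * M) ^ 2 * |f x| := by
          have hsq : |f x| ^ 2 ≤ (2 * M) ^ 2 := pow_le_pow_left₀ (abs_nonneg _) hle 2
          nlinarith [abs_nonneg (f x)]
        nlinarith [abs_nonneg (psi M (f x)), pow_nonneg (abs_nonneg (psi M (f x))) 3]
      · have h2 : |f x| ≤ 4 * |psi M (f x)| := psi_lower hM hgt.le
        have h3 : |f x| ^ 3 ≤ (4 * |psi M (f x)|) ^ 3 :=
          pow_le_pow_left₀ (abs_nonneg _) h2 3
        nlinarith [abs_nonneg (f x)]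
    calc (∫ x, |f x| ^ 3)
        ≤ ∫ x, (64 * |psi M (f x)| ^ 3 + 4 * M ^ 2 * |f x|) :=
          integral_mono int_f3 ((int_h3.const_mul 64).add (int_f1.const_mul (4 * M ^ 2)))
            pointwise
      _ = 64 * S3 + 4 * M ^ 2 * F1 := by
          rw [integral_add (int_h3.const_mul 64) (int_f1.const_mul (4 * M ^ 2)),
            integral_const_mul, integral_const_mul]
  -- A7 : log M * S1 ≤ L
  have A7 : Real.log M * S1 ≤ L := by
    have pointwise : ∀ x, Real.log M * |psi M (f x)| ≤ |f x * Real.log (|f x|)| := by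
      intro x
      rcases le_or_gt (|f x|) M with hle | hgt
      · rw [psi_eq_zero_of_le hle]
        simp [abs_nonneg]
        exact mul_nonneg (abs_nonneg _) (abs_nonneg _)
      · have hlfx : Real.log M ≤ Real.log |f x| := Real.log_le_log hM hgt.le
        have hlpos : 0 < Real.log |f x| := lt_of_lt_of_le (by linarith) hlfx
        have h1 : |psi M (f x)| ≤ |f x| := psi_abs_le hM (f x)
        rw [abs_mul]
        have h2 : |Real.log (|f x|)| = Real.log |f x| := abs_of_pos hlpos
        rw [h2]
        calc Real.log M * |psi M (f x)| ≤ Real.log M * |f x| :=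
            mul_le_mul_of_nonneg_left h1 (by linarith)
          _ ≤ Real.log |f x| * |f x| := mul_le_mul_of_nonneg_right hlfx (abs_nonneg _)
          _ = |f x| * Real.log |f x| := mul_comm _ _
    calc Real.log M * S1 = ∫ x, Real.log M * |psi M (f x)| := (integral_const_mul _ _).symm
      _ ≤ L := integral_mono (int_h1.const_mul _) int_flog pointwise
  -- key
  have KEY : S3 ≤ 324 * C0 * S1 * D := key_gn hf h2f hM
  clear_value C0 M S1 S3 D L F1
  -- final arithmetic
  have harith : 64 * S3 ≤ ε * (∫ x, (‖fderiv ℝ f x‖ ^ 2 + f x ^ 2)) * L := by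
    have h1 : 20736 * C0 ≤ ε * Real.log M := by
      have h2 : ε * (20736 * (C0 + 1) / ε) = 20736 * (C0 + 1) := by
        field_simp
      have h3 : ε * (20736 * (C0 + 1) / ε) ≤ ε * Real.log M :=
        mul_le_mul_of_nonneg_left hlogC hε.le
      nlinarith [h2, h3, hC0]
    have e1 : 64 * S3 ≤ 20736 * C0 * (S1 * D) := by nlinarith [KEY]
    have e2 : 20736 * C0 * (S1 * D) ≤ (ε * Real.log M) * (S1 * D) :=
      mul_le_mul_of_nonneg_right h1 (mul_nonneg hS1 hD)
    have e3 : (ε * Real.log M) * (S1 * D) = ε * ((Real.log M * S1) * D) := by ring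
    have e4 : (Real.log M * S1) * D ≤ L * D := mul_le_mul_of_nonneg_right A7 hD
    have e5 : L * D ≤ L * (∫ x, (‖fderiv ℝ f x‖ ^ 2 + f x ^ 2)) :=
      mul_le_mul_of_nonneg_left hH hL
    have e6 : ε * ((Real.log M * S1) * D) ≤ ε * (L * (∫ x, (‖fderiv ℝ f x‖ ^ 2 + f x ^ 2))) :=
      mul_le_mul_of_nonneg_left (e4.trans e5) hε.le
    calc 64 * S3 ≤ 20736 * C0 * (S1 * D) := e1
      _ ≤ (ε * Real.log M) * (S1 * D) := e2
      _ = ε * ((Real.log M * S1) * D) := e3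
      _ ≤ ε * (L * (∫ x, (‖fderiv ℝ f x‖ ^ 2 + f x ^ 2))) := e6
      _ = ε * (∫ x, (‖fderiv ℝ f x‖ ^ 2 + f x ^ 2)) * L := by ring
  linarith [A1, harith]
end

section
/- L¹-bound from an entropy bound (core estimate in the proof of Lemma 2.1): let (X, μ) be a finite measure space, let u : X → ℝ be measurable with u ≥ 0 almost everywhere, and suppose u and u · log u are integrable. Then for every K > 0 one has ∫_X u dμ ≤ (1/K) · ( ∫_X (u · log u − u + 1) dμ + (e^K − 1) · μ(X) ). -/
open MeasureTheory Real

lemma young_aux (K u : ℝ) (hu : 0 ≤ u) : K * u ≤ u * Real.log u - u + Real.exp K := by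
  rcases eq_or_lt_of_le hu with h | h
  · simp [← h]
    positivity
  · have h1 : K - Real.log u ≤ Real.exp (K - Real.log u) - 1 := by
      linarith [Real.add_one_le_exp (K - Real.log u)]
    have h2 : Real.exp (K - Real.log u) = Real.exp K / u := by
      rw [Real.exp_sub, Real.exp_log h]
    have h3 : u * (K - Real.log u) ≤ u * (Real.exp K / u - 1) := by
      apply mul_le_mul_of_nonneg_left _ hu
      rw [← h2]; exact h1
    have h4 : u * (Real.exp K / u) = Real.exp K := by field_simp
    nlinarith

/-- L¹-bound from an entropy bound (core estimate in the proof of Lemma 2.1):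
on a finite measure space, for `u ≥ 0` a.e. with `u` and `u log u` integrable and any `K > 0`,
`∫ u dμ ≤ (1/K) (∫ (u log u − u + 1) dμ + (e^K − 1) μ(X))`. -/
theorem L1_bound_from_entropy {X : Type*} [MeasurableSpace X] (μ : Measure X)
    [IsFiniteMeasure μ] (u : X → ℝ) (hu_meas : Measurable u)
    (hu_nonneg : ∀ᵐ x ∂μ, 0 ≤ u x)
    (hu_int : Integrable u μ)
    (hulog_int : Integrable (fun x => u x * Real.log (u x)) μ)
    (K : ℝ) (hK : 0 < K) :
    (∫ x, u x ∂μ) ≤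
      (1 / K) * ((∫ x, (u x * Real.log (u x) - u x + 1) ∂μ)
        + (Real.exp K - 1) * (μ Set.univ).toReal) := by
  have hint1 : Integrable (fun x => u x * Real.log (u x) - u x + 1) μ :=
    ((hulog_int.sub hu_int).add (integrable_const 1))
  have hint2 : Integrable (fun x => u x * Real.log (u x) - u x + 1 + (Real.exp K - 1)) μ :=
    hint1.add (integrable_const _)
  have key : K * ∫ x, u x ∂μ ≤
      (∫ x, (u x * Real.log (u x) - u x + 1) ∂μ) + (Real.exp K - 1) * (μ Set.univ).toReal := by
    have h1 : (∫ x, K * u x ∂μ) ≤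
        ∫ x, (u x * Real.log (u x) - u x + 1 + (Real.exp K - 1)) ∂μ := by
      apply integral_mono_ae (hu_int.const_mul K) hint2
      filter_upwards [hu_nonneg] with x hx
      have := young_aux K (u x) hx
      linarith
    rw [integral_const_mul] at h1
    rw [integral_add hint1 (integrable_const _), integral_const, smul_eq_mul,
      mul_comm] at h1
    simp only [Measure.real] at h1
    linarith
  rw [← sub_nonneg]
  have hKne : K ≠ 0 := ne_of_gt hK
  have : (1 / K) * ((∫ x, (u x * Real.log (u x) - u x + 1) ∂μ)
        + (Real.exp K - 1) * (μ Set.univ).toReal) - ∫ x, u x ∂μ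
      = (1 / K) * (((∫ x, (u x * Real.log (u x) - u x + 1) ∂μ)
        + (Real.exp K - 1) * (μ Set.univ).toReal) - K * ∫ x, u x ∂μ) := by
    field_simp
  rw [this]
  exact mul_nonneg (by positivity) (by linarith)
end

section
/- Gagliardo–Nirenberg inequality on an interval (inequality (e4), d = 1): for all real numbers a < b there exists a constant C > 0 such that for every continuously differentiable function f : ℝ → ℝ one has ∫_a^b f(x)⁴ dx ≤ C · ( ∫_a^b (f'(x)² + f(x)²) dx ) · ( ∫_a^b |f(x)| dx )². -/
set_option maxHeartbeats 1000000

open MeasureTheory Real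

/-- Cauchy–Schwarz for interval integrals of continuous functions. -/
lemma cs_interval {a b : ℝ} (hab : a ≤ b) {u v : ℝ → ℝ} (hu : Continuous u) (hv : Continuous v) :
    (∫ x in a..b, u x * v x) ^ 2 ≤ (∫ x in a..b, u x ^ 2) * (∫ x in a..b, v x ^ 2) := by
  have hA : ∀ t : ℝ, 0 ≤ (∫ x in a..b, v x ^ 2) * (t * t) +
      (2 * ∫ x in a..b, u x * v x) * t + (∫ x in a..b, u x ^ 2) := by
    intro t
    have h1 : (∫ x in a..b, (u x + t * v x) ^ 2) =
        (∫ x in a..b, v x ^ 2) * (t * t) +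
          (2 * ∫ x in a..b, u x * v x) * t + (∫ x in a..b, u x ^ 2) := by
      have hpt : (fun x => (u x + t * v x) ^ 2) =
          fun x => (t * t) * v x ^ 2 + (2 * t) * (u x * v x) + u x ^ 2 := by
        funext x; ring
      rw [hpt, intervalIntegral.integral_add, intervalIntegral.integral_add,
        intervalIntegral.integral_const_mul, intervalIntegral.integral_const_mul]
      · ring
      · exact (continuous_const.mul (hv.pow 2)).intervalIntegrable a b
      · exact (continuous_const.mul (hu.mul hv)).intervalIntegrable a b
      · exact ((continuous_const.mul (hv.pow 2)).add
          (continuous_const.mul (hu.mul hv))).intervalIntegrable a b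
      · exact (hu.pow 2).intervalIntegrable a b
    rw [← h1]
    exact intervalIntegral.integral_nonneg hab (fun x _ => sq_nonneg _)
  have hd := discrim_le_zero hA
  rw [discrim] at hd
  nlinarith [hd]

/-- Gagliardo–Nirenberg inequality on an interval (inequality (e4), d = 1): for `a < b`
there is `C > 0` such that for every `C¹` function `f : ℝ → ℝ`,
`∫_a^b f⁴ ≤ C ‖f‖_{H¹(a,b)}² ‖f‖_{L¹(a,b)}²`. -/
theorem gagliardo_nirenberg_interval (a b : ℝ) (hab : a < b) :
    ∃ C : ℝ, 0 < C ∧ ∀ f : ℝ → ℝ, ContDiff ℝ 1 f →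
      (∫ x in a..b, f x ^ 4) ≤
        C * (∫ x in a..b, (deriv f x ^ 2 + f x ^ 2)) * (∫ x in a..b, |f x|) ^ 2 := by
  have hd : (0:ℝ) < b - a := sub_pos.2 hab
  refine ⟨2 / (b - a) ^ 2 + 9, by positivity, ?_⟩
  intro f hf
  have hle : a ≤ b := hab.le
  have hfc : Continuous f := hf.continuous
  have hfd : Differentiable ℝ f := hf.differentiable one_ne_zero
  have hf'c : Continuous (deriv f) := hf.continuous_deriv le_rfl
  set L := ∫ x in a..b, |f x| with hLdef
  set H := ∫ x in a..b, (deriv f x ^ 2 + f x ^ 2) with hHdef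
  set I := ∫ x in a..b, f x ^ 4 with hIdef
  set J := ∫ x in a..b, f x ^ 2 * |deriv f x| with hJdef
  have hLnn : 0 ≤ L := intervalIntegral.integral_nonneg hle fun x _ => abs_nonneg _
  have hInn : 0 ≤ I := intervalIntegral.integral_nonneg hle fun x _ => by positivity
  have hJnn : 0 ≤ J := intervalIntegral.integral_nonneg hle fun x _ =>
    mul_nonneg (sq_nonneg _) (abs_nonneg _)
  -- split H
  have hHsplit : H = (∫ x in a..b, deriv f x ^ 2) + ∫ x in a..b, f x ^ 2 := by
    rw [hHdef, intervalIntegral.integral_add (f := fun x => deriv f x ^ 2) (g := fun x => f x ^ 2) ((hf'c.pow 2).intervalIntegrable a b)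
      ((hfc.pow 2).intervalIntegrable a b)]
  have hF2nn : 0 ≤ ∫ x in a..b, f x ^ 2 :=
    intervalIntegral.integral_nonneg hle fun x _ => sq_nonneg _
  have hD2nn : 0 ≤ ∫ x in a..b, deriv f x ^ 2 :=
    intervalIntegral.integral_nonneg hle fun x _ => sq_nonneg _
  have hHnn : 0 ≤ H := by rw [hHsplit]; positivity
  -- Cauchy–Schwarz 1 : L ^ 2 ≤ (b - a) * H
  have hCS1 : L ^ 2 ≤ (b - a) * H := by
    have h := cs_interval (u := fun x => |f x|) (v := fun _ => (1:ℝ)) hle hfc.abs continuous_const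
    simp only [mul_one, one_pow, sq_abs] at h
    rw [intervalIntegral.integral_const, smul_eq_mul, mul_one] at h
    calc L ^ 2 ≤ (∫ x in a..b, f x ^ 2) * (b - a) := h
      _ ≤ (b - a) * H := by rw [hHsplit]; nlinarith
  -- Cauchy–Schwarz 2 : J ^ 2 ≤ I * H
  have hCS2 : J ^ 2 ≤ I * H := by
    have h := cs_interval (u := fun x => f x ^ 2) (v := fun x => |deriv f x|) hle (hfc.pow 2) hf'c.abs
    simp only [sq_abs, ← pow_mul] at h
    calc J ^ 2 ≤ I * ∫ x in a..b, deriv f x ^ 2 := h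
      _ ≤ I * H := by rw [hHsplit]; nlinarith
  -- minimum point of |f|
  obtain ⟨y, hy, hymin⟩ := isCompact_Icc.exists_isMinOn (Set.nonempty_Icc.2 hle)
    (hfc.abs.continuousOn : ContinuousOn (fun x => |f x|) (Set.Icc a b))
  have hyL : (b - a) * |f y| ≤ L := by
    have : (∫ _ in a..b, |f y|) ≤ L :=
      intervalIntegral.integral_mono_on hle (intervalIntegrable_const)
        (hfc.abs.intervalIntegrable a b) fun x hx => hymin hx
    rwa [intervalIntegral.integral_const, smul_eq_mul] at this
  -- pointwise bound
  have hptw : ∀ x ∈ Set.Icc a b, |f x| ^ 3 ≤ |f y| ^ 3 + 3 * J := by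
    intro x hx
    have hderiv : ∀ t ∈ Set.uIcc y x, HasDerivAt (fun s => f s ^ 3)
        (3 * f t ^ 2 * deriv f t) t := by
      intro t _
      have h := (hfd t).hasDerivAt.pow 3
      norm_num at h
      exact h
    have hint : IntervalIntegrable (fun t => 3 * f t ^ 2 * deriv f t) volume y x :=
      ((continuous_const.mul (hfc.pow 2)).mul hf'c).intervalIntegrable y x
    have heq : (∫ t in y..x, 3 * f t ^ 2 * deriv f t) = f x ^ 3 - f y ^ 3 :=
      intervalIntegral.integral_eq_sub_of_hasDerivAt hderiv hint
    have habs : |∫ t in y..x, 3 * f t ^ 2 * deriv f t| ≤ 3 * J := by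
      have h3J : (∫ t in a..b, 3 * (f t ^ 2 * |deriv f t|)) = 3 * J := by
        rw [intervalIntegral.integral_const_mul]
      have hnn : ∀ t, 0 ≤ 3 * (f t ^ 2 * |deriv f t|) := fun t => by positivity
      have hbig : IntervalIntegrable (fun t => 3 * (f t ^ 2 * |deriv f t|)) volume a b :=
        (continuous_const.mul ((hfc.pow 2).mul hf'c.abs)).intervalIntegrable a b
      have hptabs : ∀ t, |3 * f t ^ 2 * deriv f t| = 3 * (f t ^ 2 * |deriv f t|) := by
        intro t
        rw [abs_mul, abs_mul]
        simp [abs_of_nonneg (sq_nonneg (f t))]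
        ring
      rcases le_total y x with hyx | hxy
      · calc |∫ t in y..x, 3 * f t ^ 2 * deriv f t|
            ≤ ∫ t in y..x, |3 * f t ^ 2 * deriv f t| :=
              intervalIntegral.abs_integral_le_integral_abs hyx
          _ = ∫ t in y..x, 3 * (f t ^ 2 * |deriv f t|) := by simp_rw [hptabs]
          _ ≤ ∫ t in a..b, 3 * (f t ^ 2 * |deriv f t|) :=
              intervalIntegral.integral_mono_interval hy.1 hyx hx.2
                (Filter.Eventually.of_forall hnn) hbig
          _ = 3 * J := h3J
      · rw [intervalIntegral.integral_symm, abs_neg]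
        calc |∫ t in x..y, 3 * f t ^ 2 * deriv f t|
            ≤ ∫ t in x..y, |3 * f t ^ 2 * deriv f t| :=
              intervalIntegral.abs_integral_le_integral_abs hxy
          _ = ∫ t in x..y, 3 * (f t ^ 2 * |deriv f t|) := by simp_rw [hptabs]
          _ ≤ ∫ t in a..b, 3 * (f t ^ 2 * |deriv f t|) :=
              intervalIntegral.integral_mono_interval hx.1 hxy hy.2
                (Filter.Eventually.of_forall hnn) hbig
          _ = 3 * J := h3J
    have : |f x ^ 3| ≤ |f y ^ 3| + 3 * J := by
      have : f x ^ 3 = f y ^ 3 + ∫ t in y..x, 3 * f t ^ 2 * deriv f t := by rw [heq]; ring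
      calc |f x ^ 3| = |f y ^ 3 + ∫ t in y..x, 3 * f t ^ 2 * deriv f t| := by rw [← this]
        _ ≤ |f y ^ 3| + |∫ t in y..x, 3 * f t ^ 2 * deriv f t| := abs_add_le _ _
        _ ≤ |f y ^ 3| + 3 * J := by linarith
    simpa [abs_pow] using this
  -- I ≤ (|f y|^3 + 3 J) * L
  have hIK : I ≤ (|f y| ^ 3 + 3 * J) * L := by
    have hmono : I ≤ ∫ x in a..b, (|f y| ^ 3 + 3 * J) * |f x| := by
      apply intervalIntegral.integral_mono_on (f := fun x => f x ^ 4) hle ((hfc.pow 4).intervalIntegrable a b)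
        ((continuous_const.mul hfc.abs).intervalIntegrable a b)
      intro x hx
      have h1 : f x ^ 4 = |f x| ^ 3 * |f x| := by
        rw [← pow_succ, pow_abs, abs_of_nonneg (by positivity : (0:ℝ) ≤ f x ^ 4)]
      rw [h1]
      exact mul_le_mul_of_nonneg_right (hptw x hx) (abs_nonneg _)
    rwa [intervalIntegral.integral_const_mul] at hmono
  clear_value L H I J
  -- key algebra : 6 J L ≤ I + 9 H L²
  have h6 : 6 * (J * L) ≤ I + 9 * (H * L ^ 2) := by
    rcases eq_or_lt_of_le hInn with h0 | h0
    · have hJ0 : J = 0 := le_antisymm (by nlinarith [hCS2, hHnn]) hJnn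
      rw [hJ0]
      nlinarith [mul_nonneg hHnn (sq_nonneg L)]
    · nlinarith [sq_nonneg (I - 3 * (J * L)), mul_le_mul_of_nonneg_right hCS2 (sq_nonneg L),
        mul_nonneg hJnn hLnn]
  -- assemble : (b-a)^3 I ≤ (b-a) H L² + 3 (b-a)^3 J L
  have hfy3 : (b - a) ^ 3 * |f y| ^ 3 ≤ L ^ 3 := by
    calc (b - a) ^ 3 * |f y| ^ 3 = ((b - a) * |f y|) ^ 3 := by ring
      _ ≤ L ^ 3 := pow_le_pow_left₀ (by positivity) hyL 3
  have hstep : (b - a) ^ 3 * I ≤ (b - a) * (H * L ^ 2) + 3 * (b - a) ^ 3 * (J * L) := by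
    have h1 : (b - a) ^ 3 * I ≤ (b - a) ^ 3 * ((|f y| ^ 3 + 3 * J) * L) :=
      mul_le_mul_of_nonneg_left hIK (by positivity)
    have h2 : (b - a) ^ 3 * |f y| ^ 3 * L ≤ L ^ 3 * L :=
      mul_le_mul_of_nonneg_right hfy3 hLnn
    have h3 : L ^ 2 * L ^ 2 ≤ ((b - a) * H) * L ^ 2 :=
      mul_le_mul_of_nonneg_right hCS1 (sq_nonneg L)
    nlinarith
  have hfin : (b - a) ^ 2 * I ≤ 2 * (H * L ^ 2) + 9 * (b - a) ^ 2 * (H * L ^ 2) := by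
    have h2 := mul_le_mul_of_nonneg_left h6 (by positivity : (0:ℝ) ≤ (b - a) ^ 3 / 2)
    have hB : (b - a) * ((b - a) ^ 2 * I) ≤
        (b - a) * (2 * (H * L ^ 2) + 9 * (b - a) ^ 2 * (H * L ^ 2)) := by nlinarith
    exact le_of_mul_le_mul_left hB hd
  have hrw : (2 / (b - a) ^ 2 + 9) * H * L ^ 2 =
      (2 * (H * L ^ 2) + 9 * (b - a) ^ 2 * (H * L ^ 2)) / (b - a) ^ 2 := by
    field_simp
  rw [hrw, le_div_iff₀ (by positivity)]
  nlinarith [hfin]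
end
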